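/- Let G be a group with finite generating set S and let Q be a commensurated subgroup of G. Then there exists an integer F such that: whenever the cosets gQ and hQ are joined by an edge labeled s ∈ S^{±1} in the Schreier graph Λ(S,Q,G), for every vertex v ∈ gQ of the Cayley graph Γ(G,S) there exists q ∈ Q with word length |q|_S < F (with respect to a fixed finite generating set of Q contained in S) such that vqs ∈ hQ. -/

import Mathlib

open Pointwise

def Commensurated {G : Type*} [Group G] (Q : Subgroup G) : Prop :=
  ∀ g : G, (Q.map (MulAut.conj g).toMonoidHom ⊓ Q).relIndex Q ≠ 0 ∧
    (Q.map (MulAut.conj g).toMonoidHom ⊓ Q).relIndex (Q.map (MulAut.conj g).toMonoidHom) ≠ 0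

private lemma list_prod_mem_pow {G : Type*} [Group G] (A : Set G) :
    ∀ l : List G, (∀ x ∈ l, x ∈ A) → l.prod ∈ A ^ l.length := by
  intro l
  induction l with
  | nil => intro _; simp [Set.mem_one]
  | cons a t ih =>
    intro h
    rw [List.prod_cons, List.length_cons, pow_succ']
    exact Set.mul_mem_mul (h a (by simp)) (ih (fun x hx => h x (by simp [hx])))

private lemma mem_pow_of_mem {G : Type*} [Group G] (T : Set G) (Q : Subgroup G)
    (hT : Subgroup.closure T = Q) : ∀ q ∈ Q, ∃ k : ℕ, q ∈ (T ∪ T⁻¹ ∪ {1}) ^ k := by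
  intro q hq
  rw [← hT] at hq
  have hq' : q ∈ Submonoid.closure (T ∪ T⁻¹) := by
    have := Subgroup.closure_toSubmonoid T
    exact this ▸ hq
  obtain ⟨l, hl, hprod⟩ := Submonoid.exists_list_of_mem_closure hq'
  refine ⟨l.length, hprod ▸ list_prod_mem_pow _ l fun x hx => Or.inl (hl x hx)⟩

private lemma aux_bound {G : Type*} [Group G] (T : Set G) (Q : Subgroup G)
    (hT : Subgroup.closure T = Q) (s : G)
    (hrel : (Q.map (MulAut.conj s).toMonoidHom ⊓ Q).relIndex Q ≠ 0) :
    ∃ F : ℕ, ∀ q₀ ∈ Q, ∃ q ∈ Q, (∃ k < F, q ∈ (T ∪ T⁻¹ ∪ {1}) ^ k) ∧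
      q₀ * q ∈ Q.map (MulAut.conj s).toMonoidHom := by
  classical
  set H := Q.map (MulAut.conj s).toMonoidHom ⊓ Q with hH
  set H' := H.subgroupOf Q with hH'
  haveI : Finite (Q ⧸ H') := Nat.finite_of_card_ne_zero hrel
  have hchoice : ∀ c : Q ⧸ H', ∃ k : ℕ, ((c.out : Q) : G) ∈ (T ∪ T⁻¹ ∪ {1}) ^ k :=
    fun c => mem_pow_of_mem T Q hT _ (c.out).2
  choose len hlen using hchoice
  obtain ⟨N, hN⟩ := Finite.exists_le len
  refine ⟨N + 1, fun q₀ hq₀ => ?_⟩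
  set q₀' : Q := ⟨q₀, hq₀⟩
  set c : Q ⧸ H' := QuotientGroup.mk q₀'⁻¹ with hc
  obtain ⟨z, hz⟩ := QuotientGroup.mk_out_eq_mul H' q₀'⁻¹
  refine ⟨(c.out : G), (c.out).2, ⟨len c, Nat.lt_succ_of_le (hN c), hlen c⟩, ?_⟩
  have hmul : q₀' * c.out = (z : Q) := by
    rw [hz]; group
  have : (q₀' * c.out : Q) ∈ H' := hmul ▸ z.2
  have hG : (q₀' * c.out : Q).1 ∈ H := this
  exact hG.1

theorem approximate_lifting {G : Type*} [Group G]
    (S : Set G) (hSfin : S.Finite) (hgen : Subgroup.closure S = ⊤)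
    (Q : Subgroup G) (hQ : Commensurated Q)
    (T : Set G) (hTS : T ⊆ S) (hT : Subgroup.closure T = Q) :
    ∃ F : ℕ, ∀ g h s : G, s ∈ S ∪ S⁻¹ →
      (∃ x ∈ g • (Q : Set G), x * s ∈ h • (Q : Set G)) →
      ∀ v ∈ g • (Q : Set G), ∃ q ∈ (Q : Set G),
        (∃ k < F, q ∈ (T ∪ T⁻¹ ∪ {1}) ^ k) ∧ v * q * s ∈ h • (Q : Set G) := by
  classical
  choose Fs hFs using fun s : G => aux_bound T Q hT s (hQ s).1
  have hfin : (S ∪ S⁻¹).Finite := hSfin.union hSfin.inv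
  obtain ⟨N, hN⟩ := (hfin.image Fs).bddAbove
  refine ⟨N, fun g h s hs ⟨x, hx, hxs⟩ v hv => ?_⟩
  have hFsN : Fs s ≤ N := hN ⟨s, hs, rfl⟩
  have hxQ : g⁻¹ * x ∈ Q := by
    simpa [smul_eq_mul] using Set.mem_smul_set_iff_inv_smul_mem.mp hx
  have hvQ : g⁻¹ * v ∈ Q := by
    simpa [smul_eq_mul] using Set.mem_smul_set_iff_inv_smul_mem.mp hv
  have hq₀ : x⁻¹ * v ∈ Q := by
    have := mul_mem (inv_mem hxQ) hvQ
    simpa [mul_assoc] using this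
  obtain ⟨q, hqQ, ⟨k, hk, hkmem⟩, hmem⟩ := hFs s (x⁻¹ * v) hq₀
  refine ⟨q, hqQ, ⟨k, lt_of_lt_of_le hk hFsN, hkmem⟩, ?_⟩
  obtain ⟨y, hyQ, hy⟩ := hmem
  have hy' : s * y * s⁻¹ = x⁻¹ * v * q := hy
  have hxsQ : h⁻¹ * (x * s) ∈ Q := by
    simpa [smul_eq_mul] using Set.mem_smul_set_iff_inv_smul_mem.mp hxs
  have key : v * q * s = (x * s) * y := by
    have : v * q = x * (s * y * s⁻¹) := by rw [hy']; group
    rw [this]; group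
  rw [Set.mem_smul_set_iff_inv_smul_mem]
  simpa [smul_eq_mul, key, mul_assoc] using mul_mem hxsQ hyQ
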